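/- For 0 < α < 1, the function a₀(α,y) = π(1-α)/2 - arctan(√y/√(1-α²-y)) + α·arctan(α√y/√(1-α²-y)) vanishes in the limit y → (1-α²)⁻, and admits the expansion a₀(α,y) = ((1-α²)(1-α²-y)^{3/2}/(3α² y^{3/2}))·(1 + O((1-α²-y)/α²)) as y → (1-α²)⁻. -/

import Mathlib

open Filter Set

/-- a₀(α,y) = π(1-α)/2 - arctan(√y/√(1-α²-y)) + α arctan(α√y/√(1-α²-y)). -/
noncomputable def a0 (α y : ℝ) : ℝ :=
  Real.pi * (1 - α) / 2 - Real.arctan (Real.sqrt y / Real.sqrt (1 - α ^ 2 - y)) +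
    α * Real.arctan (α * Real.sqrt y / Real.sqrt (1 - α ^ 2 - y))

noncomputable def f0 (α x : ℝ) : ℝ := Real.arctan x - α * Real.arctan (x / α)

lemma key (α : ℝ) (hα0 : 0 < α) :
    Tendsto (fun x => f0 α x / x ^ 3) (nhdsWithin (0:ℝ) (Ioi 0))
      (nhds ((1 - α ^ 2) / (3 * α ^ 2))) := by
  have hα := hα0.ne'
  have h1x : ∀ x : ℝ, (1:ℝ) + x ^ 2 ≠ 0 := fun x => by positivity
  apply HasDerivAt.lhopital_zero_nhdsGT
    (f' := fun x => 1/(1+x^2) - 1/(1+(x/α)^2)) (g' := fun x => 3*x^2)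
  · filter_upwards with x
    have h2 : HasDerivAt (fun y : ℝ => Real.arctan (y / α))
        (1 / (1 + (x/α) ^ 2) * (1/α)) x := by
      simpa using ((hasDerivAt_id x).div_const α).arctan
    have h := (Real.hasDerivAt_arctan x).sub (h2.const_mul α)
    refine h.congr_deriv ?_
    field_simp
  · filter_upwards with x
    simpa using hasDerivAt_pow 3 x
  · filter_upwards [self_mem_nhdsWithin] with x hx
    have : (0:ℝ) < x := hx
    positivity
  · have hc : ContinuousAt (fun x => f0 α x) 0 := by
      exact (Real.continuous_arctan.sub (continuous_const.mul
        (Real.continuous_arctan.comp (continuous_id.div_const α)))).continuousAt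
    have h0 : f0 α 0 = 0 := by simp [f0]
    simpa [h0] using hc.tendsto.mono_left nhdsWithin_le_nhds
  · have : Tendsto (fun x : ℝ => x ^ 3) (nhds 0) (nhds (0:ℝ)) := by
      simpa using ((continuous_pow 3).tendsto (0:ℝ))
    exact this.mono_left nhdsWithin_le_nhds
  · have heq : ∀ᶠ x in nhdsWithin (0:ℝ) (Ioi 0),
        (1/α^2 - 1)/(3*(1+x^2)*(1+(x/α)^2))
          = (1/(1+x^2) - 1/(1+(x/α)^2)) / (3*x^2) := by
      filter_upwards [self_mem_nhdsWithin] with x hx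
      have hx0 : x ≠ 0 := ne_of_gt hx
      field_simp
      ring
    have hc : ContinuousAt (fun x : ℝ => (1/α^2 - 1)/(3*(1+x^2)*(1+(x/α)^2))) 0 := by
      apply ContinuousAt.div
      · fun_prop
      · fun_prop
      · simp
    have hval : (fun x : ℝ => (1/α^2 - 1)/(3*(1+x^2)*(1+(x/α)^2))) 0
        = (1 - α ^ 2) / (3 * α ^ 2) := by
      norm_num
      rw [div_eq_div_iff (by norm_num) (by positivity)]
      field_simp
    rw [show ((1 - α ^ 2) / (3 * α ^ 2))
        = (fun x : ℝ => (1/α^2 - 1)/(3*(1+x^2)*(1+(x/α)^2))) 0 from hval.symm]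
    exact Tendsto.congr' heq (hc.tendsto.mono_left nhdsWithin_le_nhds)

lemma a0_eq (α y : ℝ) (hα0 : 0 < α) (hy0 : 0 < y) (hy1 : y < 1 - α ^ 2) :
    a0 α y = f0 α (Real.sqrt (1 - α ^ 2 - y) / Real.sqrt y) := by
  set s := Real.sqrt y with hs
  set t := Real.sqrt (1 - α ^ 2 - y) with ht
  have hspos : 0 < s := Real.sqrt_pos.mpr hy0
  have htpos : 0 < t := Real.sqrt_pos.mpr (by linarith)
  have h1 : Real.arctan (s / t) = Real.pi / 2 - Real.arctan (t / s) := by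
    rw [show s / t = (t / s)⁻¹ by rw [inv_div]]
    exact Real.arctan_inv_of_pos (by positivity)
  have h2 : Real.arctan (α * s / t) = Real.pi / 2 - Real.arctan (t / s / α) := by
    rw [show α * s / t = (t / s / α)⁻¹ by field_simp]
    exact Real.arctan_inv_of_pos (by positivity)
  unfold a0 f0
  rw [← hs, ← ht, h1, h2]
  ring

theorem a0_vanishing_and_expansion (α : ℝ) (hα0 : 0 < α) (hα1 : α < 1) :
    Tendsto (a0 α) (nhdsWithin (1 - α ^ 2) (Iio (1 - α ^ 2))) (nhds 0) ∧
    Tendsto (fun y => a0 α y / (1 - α ^ 2 - y) ^ ((3 : ℝ) / 2))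
      (nhdsWithin (1 - α ^ 2) (Iio (1 - α ^ 2)))
      (nhds (1 / (3 * α ^ 2 * Real.sqrt (1 - α ^ 2)))) := by
  have hc : 0 < 1 - α ^ 2 := by nlinarith
  set c := 1 - α ^ 2 with hcdef
  have hsc : (0:ℝ) < Real.sqrt c := Real.sqrt_pos.mpr hc
  set u : ℝ → ℝ := fun y => Real.sqrt (c - y) / Real.sqrt y with hudef
  have hmem : Ioo (c/2) c ∈ nhdsWithin c (Iio c) :=
    Ioo_mem_nhdsLT_of_mem ⟨by linarith, le_refl c⟩
  -- u tends to 0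
  have hu : Tendsto u (nhdsWithin c (Iio c)) (nhds 0) := by
    have hcont : ContinuousAt u c := by
      apply ContinuousAt.div
      · exact (Real.continuous_sqrt.comp (continuous_const.sub continuous_id)).continuousAt
      · exact Real.continuous_sqrt.continuousAt
      · exact ne_of_gt hsc
    have huc : u c = 0 := by simp [hudef]
    simpa [huc] using hcont.tendsto.mono_left nhdsWithin_le_nhds
  have hu' : Tendsto u (nhdsWithin c (Iio c)) (nhdsWithin 0 (Ioi 0)) := by
    rw [tendsto_nhdsWithin_iff]
    refine ⟨hu, ?_⟩
    filter_upwards [hmem] with y hy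
    have h1 : 0 < Real.sqrt (c - y) := Real.sqrt_pos.mpr (by linarith [hy.2])
    have h2 : 0 < Real.sqrt y := Real.sqrt_pos.mpr (by linarith [hy.1])
    exact div_pos h1 h2
  have heqa : ∀ᶠ y in nhdsWithin c (Iio c), a0 α y = f0 α (u y) := by
    filter_upwards [hmem] with y hy
    exact a0_eq α y hα0 (by linarith [hy.1]) hy.2
  constructor
  · have hcf : ContinuousAt (f0 α) 0 := by
      exact (Real.continuous_arctan.sub (continuous_const.mul
        (Real.continuous_arctan.comp (continuous_id.div_const α)))).continuousAt
    have h0 : f0 α 0 = 0 := by simp [f0]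
    have := (hcf.tendsto.mono_left nhdsWithin_le_nhds).comp hu'
    rw [h0] at this
    exact Tendsto.congr' (heqa.mono fun y h => h.symm) this
  · have h1 : Tendsto (fun y => f0 α (u y) / (u y) ^ 3) (nhdsWithin c (Iio c))
        (nhds ((1 - α ^ 2) / (3 * α ^ 2))) := (key α hα0).comp hu'
    have h2 : Tendsto (fun y : ℝ => Real.sqrt y ^ 3) (nhdsWithin c (Iio c))
        (nhds (Real.sqrt c ^ 3)) :=
      (((Real.continuous_sqrt.pow 3).tendsto c).mono_left nhdsWithin_le_nhds)
    have h3 := h1.div h2 (by positivity)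
    have heq2 : ∀ᶠ y in nhdsWithin c (Iio c),
        f0 α (u y) / (u y) ^ 3 / Real.sqrt y ^ 3
          = a0 α y / (c - y) ^ ((3:ℝ)/2) := by
      filter_upwards [hmem] with y hy
      have hy0 : 0 < y := by linarith [hy.1]
      have hyc : 0 < c - y := by linarith [hy.2]
      have hs : 0 < Real.sqrt y := Real.sqrt_pos.mpr hy0
      have hrpow : (c - y) ^ ((3:ℝ)/2) = Real.sqrt (c - y) ^ 3 := by
        rw [Real.sqrt_eq_rpow, ← Real.rpow_natCast ((c - y) ^ ((1:ℝ)/2)) 3,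
          ← Real.rpow_mul hyc.le]
        norm_num
      have hts : Real.sqrt (c - y) = u y * Real.sqrt y :=
        (div_mul_cancel₀ _ (ne_of_gt hs)).symm
      rw [a0_eq α y hα0 hy0 hy.2, hrpow, hts, mul_pow, ← div_div,
        mul_div_cancel_right₀ _ (ne_of_gt hs)]
    have hfin : (1 - α ^ 2) / (3 * α ^ 2) / Real.sqrt c ^ 3
        = 1 / (3 * α ^ 2 * Real.sqrt c) := by
      have h4 : Real.sqrt c ^ 3 = c * Real.sqrt c := by
        rw [pow_succ, Real.sq_sqrt hc.le]
      rw [h4, ← hcdef]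
      field_simp
    rw [← hfin]
    exact Tendsto.congr' heq2 h3
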